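/- Let (M, ⊕, ⪯) be a monoid with compatible partial order, c : M → ℝ non-decreasing, ρ : M → {0,1} non-decreasing. Fix a vertex v, a set B_v ⊆ M such that every v-d path Q satisfies b ⪯ q_Q for some b ∈ B_v, and a partial o-v path P with resource q_P. Define key(P) = min{ c(q_P ⊕ b) : b ∈ B_v, ρ(q_P ⊕ b) = 0 } (min over the empty set being +∞). Then for every feasible o-d path of the form P + Q (Q a v-d path with ρ(q_P ⊕ q_Q) = 0), we have key(P) ≤ c(q_P ⊕ q_Q). -/
import Mathlib

/-- Directed walks in a digraph given by its arc relation `A`. -/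
inductive Walk {V : Type*} (A : V → V → Prop) : V → V → Type _
  | nil (v : V) : Walk A v v
  | cons {u v w : V} (h : A u v) (t : Walk A v w) : Walk A u w

namespace Walk

variable {V : Type*} {A : V → V → Prop} {M : Type*}

/-- The resource of a walk. -/
def res (op : M → M → M) (e : M) (q : V → V → M) : ∀ {u w : V}, Walk A u w → M
  | _, _, .nil _ => e
  | _, _, @Walk.cons _ _ u v _ _ t => op (q u v) (res op e q t)

end Walk

/-- The key `key(P) = min { c (q_P ⊕ b) : b ∈ B_v, ρ (q_P ⊕ b) = 0 }` (the minimum over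
the empty set being `+∞`) is a lower bound on the cost of every feasible completion
`P + Q` of the partial path `P`. -/
theorem stmt15 {V M : Type*} (A : V → V → Prop)
    (op : M → M → M) (e : M) (le : M → M → Prop)
    (hassoc : ∀ a b c : M, op (op a b) c = op a (op b c))
    (hneutral : ∀ a : M, op e a = a ∧ op a e = a)
    (hrefl : ∀ a : M, le a a)
    (htrans : ∀ a b c : M, le a b → le b c → le a c)
    (hantisymm : ∀ a b : M, le a b → le b a → a = b)
    (hcompL : ∀ a b c : M, le b c → le (op a b) (op a c))
    (hcompR : ∀ a b c : M, le b c → le (op b a) (op c a))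
    (q : V → V → M)
    (c : M → ℝ) (hc : ∀ a b : M, le a b → c a ≤ c b)
    (ρ : M → ℕ) (hρ01 : ∀ a : M, ρ a = 0 ∨ ρ a = 1)
    (hρmono : ∀ a b : M, le a b → ρ a ≤ ρ b)
    (o v d : V) (B : Finset M)
    (hB : ∀ Q : Walk A v d, ∃ b ∈ B, le b (Q.res op e q))
    (P : Walk A o v)
    (key : WithTop ℝ)
    (hkey : key = (B.filter fun b => ρ (op (P.res op e q) b) = 0).inf
      (fun b => ((c (op (P.res op e q) b) : ℝ) : WithTop ℝ)))
    (Q : Walk A v d)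
    (hfeas : ρ (op (P.res op e q) (Q.res op e q)) = 0) :
    key ≤ ((c (op (P.res op e q) (Q.res op e q)) : ℝ) : WithTop ℝ) := by
  obtain ⟨b, hbB, hble⟩ := hB Q
  have hle : le (op (P.res op e q) b) (op (P.res op e q) (Q.res op e q)) :=
    hcompL _ _ _ hble
  have hρb : ρ (op (P.res op e q) b) = 0 :=
    Nat.le_zero.mp (hfeas ▸ hρmono _ _ hle)
  have hmem : b ∈ B.filter fun b => ρ (op (P.res op e q) b) = 0 :=
    Finset.mem_filter.mpr ⟨hbB, hρb⟩
  calc key ≤ ((c (op (P.res op e q) b) : ℝ) : WithTop ℝ) := hkey ▸ Finset.inf_le hmem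
    _ ≤ _ := by exact_mod_cast hc _ _ hle
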